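/- The proportion of monic polynomials of degree d ≥ 2 in (ℤ/p^k)[x] that are separable is 1 - 1/p; that is, the number of separable monic polynomials of degree d equals (1 - p^{-1}) · p^{kd}. -/

import Mathlib

open Polynomial Function UniqueFactorizationMonoid

variable {R : Type*} [CommRing R]

noncomputable def monicMk (n : ℕ) (c : Fin n → R) : R[X] :=
  X ^ n + ∑ i : Fin n, C (c i) * X ^ (i : ℕ)

theorem monicMk_degree_lt (n : ℕ) (c : Fin n → R) :
    (∑ i : Fin n, C (c i) * X ^ (i : ℕ)).degree < (n : WithBot ℕ) := by
  apply lt_of_le_of_lt (degree_sum_le _ _)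
  rw [Finset.sup_lt_iff (by exact_mod_cast WithBot.bot_lt_coe n)]
  intro i _
  exact lt_of_le_of_lt (degree_C_mul_X_pow_le _ _) (by exact_mod_cast i.2)

theorem monicMk_coeff_lt (n : ℕ) (c : Fin n → R) {m : ℕ} (hm : m < n) :
    (monicMk n c).coeff m = c ⟨m, hm⟩ := by
  rw [monicMk, coeff_add, coeff_X_pow, if_neg hm.ne, finset_sum_coeff]
  simp only [coeff_C_mul, coeff_X_pow, mul_ite, mul_one, mul_zero]
  rw [Finset.sum_eq_single (⟨m, hm⟩ : Fin n)] <;> simp +contextual [Fin.ext_iff, eq_comm]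

theorem monicMk_monic (n : ℕ) (c : Fin n → R) : (monicMk n c).Monic :=
  monic_X_pow_add (monicMk_degree_lt n c)

theorem monicMk_natDegree [Nontrivial R] (n : ℕ) (c : Fin n → R) :
    (monicMk n c).natDegree = n := by
  apply natDegree_eq_of_degree_eq_some
  rw [monicMk, degree_add_eq_left_of_degree_lt (by simpa using monicMk_degree_lt n c),
    degree_X_pow]

theorem monicMk_coeff_self [Nontrivial R] (n : ℕ) (c : Fin n → R) :
    (monicMk n c).coeff n = 1 := by
  have := (monicMk_monic n c).coeff_natDegree
  rwa [monicMk_natDegree] at this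

noncomputable def monicEquiv (R : Type*) [CommRing R] [Nontrivial R] (n : ℕ) :
    {f : R[X] // f.Monic ∧ f.natDegree = n} ≃ (Fin n → R) where
  toFun f i := f.1.coeff i
  invFun c := ⟨monicMk n c, monicMk_monic n c, monicMk_natDegree n c⟩
  left_inv := by
    rintro ⟨f, hf, rfl⟩
    ext m
    rcases lt_trichotomy m f.natDegree with h | rfl | h
    · rw [monicMk_coeff_lt _ _ h]
    · rw [monicMk_coeff_self, hf.coeff_natDegree]
    · rw [coeff_eq_zero_of_natDegree_lt, coeff_eq_zero_of_natDegree_lt h]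
      rw [monicMk_natDegree]; exact h
  right_inv c := by ext i; simp [monicMk_coeff_lt n c i.2]


variable {F : Type*} [Field F]

theorem exists_sq_decomp : ∀ n : ℕ, ∀ f : F[X], f.Monic → f.natDegree ≤ n →
    ∃ g h : F[X], g.Monic ∧ h.Monic ∧ Squarefree g ∧ f = g * h ^ 2 := by
  intro n
  induction n with
  | zero =>
    intro f hf hdeg
    exact ⟨f, 1, hf, monic_one, by
      rw [(hf.natDegree_eq_zero).1 (Nat.le_zero.1 hdeg)]
      exact squarefree_one, by ring⟩
  | succ n ih =>
    intro f hf hdeg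
    by_cases hsf : Squarefree f
    · exact ⟨f, 1, hf, monic_one, hsf, by ring⟩
    · rw [Squarefree] at hsf
      push_neg at hsf
      obtain ⟨x, hx2, hxu⟩ := hsf
      have hx0 : x ≠ 0 := by
        rintro rfl; rw [mul_zero] at hx2
        exact hf.ne_zero (zero_dvd_iff.1 hx2)
      have hlc : x.leadingCoeff ≠ 0 := leadingCoeff_ne_zero.2 hx0
      set y := x * C x.leadingCoeff⁻¹ with hy
      have hym : y.Monic := monic_mul_leadingCoeff_inv hx0
      have hydvd : y * y ∣ f := by
        obtain ⟨t, ht⟩ := hx2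
        refine ⟨C (x.leadingCoeff ^ 2) * t, ?_⟩
        have hC : C x.leadingCoeff⁻¹ * C x.leadingCoeff = 1 := by
          rw [← C_mul, inv_mul_cancel₀ hlc, C_1]
        rw [ht, hy, C_pow]
        linear_combination (-(x ^ 2 * t) * (C x.leadingCoeff⁻¹ * C x.leadingCoeff + 1)) * hC
      obtain ⟨f₂, hf₂⟩ := hydvd
      have hf₂m : f₂.Monic := (hym.mul hym).of_mul_monic_left (hf₂ ▸ hf)
      have hyu : ¬ IsUnit y := by
        intro hu
        apply hxu
        have : x = y * C x.leadingCoeff := by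
          rw [hy, mul_assoc, ← C_mul, inv_mul_cancel₀ hlc, C_1, mul_one]
        rw [this]
        exact hu.mul (isUnit_C.2 (isUnit_iff_ne_zero.2 hlc))
      have hypos : 0 < y.natDegree := by
        rcases Nat.eq_zero_or_pos y.natDegree with h | h
        · exact absurd (hym.natDegree_eq_zero.1 h ▸ isUnit_one) hyu
        · exact h
      have hdeg₂ : f₂.natDegree ≤ n := by
        have hdf : f.natDegree = y.natDegree + y.natDegree + f₂.natDegree := by
          rw [hf₂, (hym.mul hym).natDegree_mul hf₂m, hym.natDegree_mul hym]
        omega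
      obtain ⟨g, h, hg, hh, hgs, hgh⟩ := ih f₂ hf₂m hdeg₂
      exact ⟨g, y * h, hg, hym.mul hh, hgs, by rw [hf₂, hgh]; ring⟩

theorem sq_decomp_unique {g₁ h₁ g₂ h₂ : F[X]} (hg₁ : g₁.Monic) (hh₁ : h₁.Monic)
    (hg₂ : g₂.Monic) (hh₂ : h₂.Monic) (hs₁ : Squarefree g₁) (hs₂ : Squarefree g₂)
    (heq : g₁ * h₁ ^ 2 = g₂ * h₂ ^ 2) : g₁ = g₂ ∧ h₁ = h₂ := by
  letI : NormalizationMonoid F[X] := UniqueFactorizationMonoid.normalizationMonoid.toNormalizationMonoid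
  classical
  have hg₁0 := hg₁.ne_zero; have hg₂0 := hg₂.ne_zero
  have hh₁0 := hh₁.ne_zero; have hh₂0 := hh₂.ne_zero
  have hnf : normalizedFactors g₁ + 2 • normalizedFactors h₁
      = normalizedFactors g₂ + 2 • normalizedFactors h₂ := by
    have e1 := normalizedFactors_mul hg₁0 (pow_ne_zero 2 hh₁0)
    have e2 := normalizedFactors_mul hg₂0 (pow_ne_zero 2 hh₂0)
    rw [normalizedFactors_pow] at e1 e2
    rw [← e1, ← e2, heq]
  have hnd₁ := (squarefree_iff_nodup_normalizedFactors hg₁0).1 hs₁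
  have hnd₂ := (squarefree_iff_nodup_normalizedFactors hg₂0).1 hs₂
  have hcount : ∀ a, Multiset.count a (normalizedFactors h₁)
      = Multiset.count a (normalizedFactors h₂) ∧
      Multiset.count a (normalizedFactors g₁) = Multiset.count a (normalizedFactors g₂) := by
    intro a
    have c1 := Multiset.nodup_iff_count_le_one.1 hnd₁ a
    have c2 := Multiset.nodup_iff_count_le_one.1 hnd₂ a
    have := congrArg (Multiset.count a) hnf
    simp only [Multiset.count_add, Multiset.count_nsmul] at this
    omega
  have hh : h₁ = h₂ := by
    apply eq_of_monic_of_associated hh₁ hh₂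
    rw [associated_iff_normalizedFactors_eq_normalizedFactors hh₁0 hh₂0]
    exact Multiset.ext.2 fun a => (hcount a).1
  subst hh
  exact ⟨mul_right_cancel₀ (pow_ne_zero 2 hh₁0) heq, rfl⟩


section DivX
variable {R : Type*} [CommRing R]

theorem divX_X_mul_add_C (h : R[X]) (c : R) : (X * h + C c).divX = h := by
  ext n
  simp [coeff_divX, coeff_C]

theorem coeff_zero_X_mul_add_C (h : R[X]) (c : R) : (X * h + C c).coeff 0 = c := by
  simp [coeff_X_mul]

theorem monic_X_mul_add_C [Nontrivial R] {h : R[X]} (hh : h.Monic) (c : R) :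
    (X * h + C c).Monic := by
  have h1 : (X * h).Monic := monic_X.mul hh
  apply h1.add_of_left
  apply lt_of_le_of_lt degree_C_le
  rw [degree_eq_natDegree h1.ne_zero, monic_X.natDegree_mul hh, natDegree_X]
  exact_mod_cast (by omega : 0 < 1 + h.natDegree)

theorem natDegree_X_mul_add_C [Nontrivial R] {h : R[X]} (hh : h.Monic) (c : R) :
    (X * h + C c).natDegree = h.natDegree + 1 := by
  rw [natDegree_add_C, monic_X.natDegree_mul hh, natDegree_X, add_comm]

theorem monic_divX {R : Type*} [CommRing R] {h : R[X]} (hh : h.Monic) (hd : 0 < h.natDegree) :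
    h.divX.Monic := by
  rw [Monic, leadingCoeff, natDegree_divX_eq_natDegree_tsub_one, coeff_divX,
    Nat.sub_add_cancel hd]
  exact hh.coeff_natDegree
end DivX


variable {F : Type*} [Field F] [Finite F]

-- from p1:
theorem card_monic (R : Type*) [CommRing R] [Nontrivial R] [Finite R] (n : ℕ) :
    Nat.card {f : R[X] // f.Monic ∧ f.natDegree = n} = Nat.card R ^ n := by
  rw [Nat.card_congr (monicEquiv R n), Nat.card_fun]
  simp

instance finiteMonic (R : Type*) [CommRing R] [Nontrivial R] [Finite R] (n : ℕ) :
    Finite {f : R[X] // f.Monic ∧ f.natDegree = n} :=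
  Finite.of_equiv _ (monicEquiv R n).symm

/-- pairs (g,h), g monic squarefree, h monic, deg g + 2 deg h = n -/
abbrev SqPairs (F : Type*) [Field F] (n : ℕ) : Type _ :=
  {gh : F[X] × F[X] // gh.1.Monic ∧ Squarefree gh.1 ∧ gh.2.Monic ∧
    gh.1.natDegree + 2 * gh.2.natDegree = n}

noncomputable def sqPairsEquiv (n : ℕ) :
    SqPairs F n ≃ {f : F[X] // f.Monic ∧ f.natDegree = n} := by
  apply Equiv.ofBijective (fun gh => ⟨gh.1.1 * gh.1.2 ^ 2,
    gh.2.1.mul (gh.2.2.2.1.pow 2), by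
      have hd := gh.2.2.2.2
      rw [gh.2.1.natDegree_mul (gh.2.2.2.1.pow 2), gh.2.2.2.1.natDegree_pow]
      omega⟩)
  constructor
  · rintro ⟨⟨g₁, h₁⟩, hm₁, hs₁, hhm₁, hd₁⟩ ⟨⟨g₂, h₂⟩, hm₂, hs₂, hhm₂, hd₂⟩ heq
    simp only [Subtype.mk.injEq] at heq
    obtain ⟨e1, e2⟩ := sq_decomp_unique hm₁ hhm₁ hm₂ hhm₂ hs₁ hs₂ heq
    subst e1; subst e2; rfl
  · rintro ⟨f, hf, hdeg⟩
    obtain ⟨g, h, hg, hh, hgs, hgh⟩ := exists_sq_decomp f.natDegree f hf le_rfl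
    refine ⟨⟨(g, h), hg, hgs, hh, ?_⟩, ?_⟩
    · rw [← hdeg, hgh, hg.natDegree_mul (hh.pow 2), hh.natDegree_pow]
    · simp [← hgh]

instance (n : ℕ) : Finite (SqPairs F n) := Finite.of_equiv _ (sqPairsEquiv n).symm

noncomputable def sqPairsZeroEquiv (n : ℕ) :
    {x : SqPairs F n // x.1.2.natDegree = 0}
      ≃ {f : F[X] // f.Monic ∧ f.natDegree = n ∧ Squarefree f} where
  toFun x := ⟨x.1.1.1, x.1.2.1, by have := x.1.2.2.2.2; have := x.2; omega, x.1.2.2.1⟩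
  invFun g := ⟨⟨(g.1, 1), g.2.1, g.2.2.2, monic_one, by simp [g.2.2.1]⟩, by simp⟩
  left_inv := by
    rintro ⟨⟨⟨g, h⟩, hm, hs, hhm, hd⟩, h0⟩
    have : h = 1 := hhm.natDegree_eq_zero.1 h0
    subst this
    rfl
  right_inv g := rfl

noncomputable def sqPairsPosEquiv (n : ℕ) :
    {x : SqPairs F (n + 2) // ¬ x.1.2.natDegree = 0} ≃ F × SqPairs F n where
  toFun x := ⟨x.1.1.2.coeff 0, ⟨(x.1.1.1, x.1.1.2.divX), x.1.2.1, x.1.2.2.1,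
    monic_divX x.1.2.2.2.1 (by have h2 := x.2; omega), by
      have := x.1.2.2.2.2
      have h2 := x.2
      dsimp only
      rw [natDegree_divX_eq_natDegree_tsub_one]
      omega⟩⟩
  invFun cy := ⟨⟨(cy.2.1.1, X * cy.2.1.2 + C cy.1), cy.2.2.1, cy.2.2.2.1,
    monic_X_mul_add_C cy.2.2.2.2.1 _, by
      dsimp only
      rw [natDegree_X_mul_add_C cy.2.2.2.2.1]
      have := cy.2.2.2.2.2
      omega⟩, by
      dsimp only
      rw [natDegree_X_mul_add_C cy.2.2.2.2.1]
      omega⟩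
  left_inv := by
    rintro ⟨⟨⟨g, h⟩, hm, hs, hhm, hd⟩, h0⟩
    exact Subtype.ext (Subtype.ext (Prod.ext_iff.2 ⟨rfl, X_mul_divX_add h⟩))
  right_inv := by
    rintro ⟨c, ⟨⟨g, h⟩, hm, hs, hhm, hd⟩⟩
    exact Prod.ext_iff.2 ⟨coeff_zero_X_mul_add_C h c,
      Subtype.ext (Prod.ext_iff.2 ⟨rfl, divX_X_mul_add_C h c⟩)⟩

theorem card_sqPairs_succ (n : ℕ) :
    Nat.card (SqPairs F (n + 2))
      = Nat.card {f : F[X] // f.Monic ∧ f.natDegree = (n+2) ∧ Squarefree f}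
        + Nat.card F * Nat.card (SqPairs F n) := by
  classical
  rw [← Nat.card_congr (Equiv.sumCompl (fun x : SqPairs F (n+2) => x.1.2.natDegree = 0)),
    Nat.card_sum, Nat.card_congr (sqPairsZeroEquiv (n+2)),
    Nat.card_congr (sqPairsPosEquiv n), Nat.card_prod]

theorem card_squarefree_monic (F : Type*) [Field F] [Finite F] {d : ℕ} (hd : 2 ≤ d) :
    Nat.card {f : F[X] // f.Monic ∧ f.natDegree = d ∧ Squarefree f} + Nat.card F ^ (d - 1)
      = Nat.card F ^ d := by
  obtain ⟨n, rfl⟩ : ∃ n, d = n + 2 := ⟨d - 2, by omega⟩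
  have key := card_sqPairs_succ (F := F) n
  rw [Nat.card_congr (sqPairsEquiv (F := F) (n+2)), card_monic] at key
  rw [Nat.card_congr (sqPairsEquiv (F := F) n), card_monic] at key
  have : n + 2 - 1 = n + 1 := rfl
  rw [this]
  rw [key]
  ring


theorem separable_of_map_separable {R S : Type*} [CommRing R] [CommRing S] (φ : R →+* S)
    (hsurj : Surjective φ) (hnil : ∀ x, φ x = 0 → IsNilpotent x) {f : R[X]}
    (hsep : (f.map φ).Separable) : f.Separable := by
  obtain ⟨a', b', hab⟩ := hsep
  obtain ⟨a, rfl⟩ := Polynomial.map_surjective φ hsurj a'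
  obtain ⟨b, rfl⟩ := Polynomial.map_surjective φ hsurj b'
  set u := a * f + b * f.derivative with hu
  have hmapu : u.map φ = 1 := by
    rw [hu, Polynomial.map_add, Polynomial.map_mul, Polynomial.map_mul,
      ← derivative_map]
    exact hab
  have hnilu : IsNilpotent (u - 1) := by
    rw [Polynomial.isNilpotent_iff]
    intro i
    apply hnil
    have : (u - 1).map φ = 0 := by rw [Polynomial.map_sub, hmapu]; simp
    have := congrArg (fun q => Polynomial.coeff q i) this
    simpa [coeff_map, Polynomial.coeff_one, apply_ite φ] using this
  have huu : IsUnit u := by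
    have := hnilu.isUnit_add_one
    simpa using this
  obtain ⟨w, hw⟩ := huu
  refine ⟨↑w⁻¹ * a, ↑w⁻¹ * b, ?_⟩
  have : (↑w⁻¹ : R[X]) * u = 1 := by rw [← hw]; simp
  rw [← this, hu]; ring

theorem zmod_castHom_ker_nilpotent (p k : ℕ) (hk : 1 ≤ k) [Fact p.Prime]
    (x : ZMod (p ^ k)) (hx : ZMod.castHom (dvd_pow_self p (by omega : k ≠ 0)) (ZMod p) x = 0) :
    IsNilpotent x := by
  have hp : Fact p.Prime := inferInstance
  have : NeZero (p ^ k) := ⟨pow_ne_zero k hp.1.ne_zero⟩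
  have hval : ((x.val : ℕ) : ZMod p) = 0 := by
    rwa [ZMod.castHom_apply, ← ZMod.natCast_val] at hx
  rw [ZMod.natCast_eq_zero_iff] at hval
  obtain ⟨m, hm⟩ := hval
  refine ⟨k, ?_⟩
  have : x = ((p * m : ℕ) : ZMod (p ^ k)) := by
    rw [← hm, ZMod.natCast_val, ZMod.cast_id]
  rw [this]
  push_cast
  rw [mul_pow, ← Nat.cast_pow, ZMod.natCast_self, zero_mul]

theorem zmod_castHom_surjective (p k : ℕ) (hk : 1 ≤ k) [NeZero p] :
    Surjective (ZMod.castHom (dvd_pow_self p (by omega : k ≠ 0)) (ZMod p)) := by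
  intro y
  refine ⟨((y.val : ℕ) : ZMod (p ^ k)), ?_⟩
  rw [map_natCast, ZMod.natCast_zmod_val]


noncomputable def prodSubtypeFst {α β : Type*} (P : α → Prop) :
    {y : α × β // P y.1} ≃ {a : α // P a} × β where
  toFun y := (⟨y.1.1, y.2⟩, y.1.2)
  invFun z := ⟨(z.1.1, z.2), z.1.2⟩
  left_inv y := rfl
  right_inv z := rfl

theorem monicMk_map {R S : Type*} [CommRing R] [CommRing S] (φ : R →+* S) (n : ℕ)
    (c : Fin n → R) : (monicMk n c).map φ = monicMk n (φ ∘ c) := by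
  simp [monicMk, Polynomial.map_sum, Function.comp]

/-- The proportion of monic polynomials of degree `d ≥ 2` over `ℤ/p^k` that are separable
is `1 - 1/p`: the number of separable monic polynomials of degree `d` is `(1 - p⁻¹)·p^(kd)`. -/
theorem proportion_monic_separable_zmod_prime_pow (p k d : ℕ) (hp : p.Prime) (hk : 1 ≤ k)
    (hd : 2 ≤ d) :
    (Nat.card {f : (ZMod (p ^ k))[X] | f.Monic ∧ f.natDegree = d ∧ f.Separable} : ℚ)
      = (1 - (p : ℚ)⁻¹) * (p : ℚ) ^ (k * d) := by
  haveI : Fact p.Prime := ⟨hp⟩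
  haveI : NeZero p := ⟨hp.ne_zero⟩
  haveI : Fact (1 < p ^ k) := ⟨Nat.one_lt_pow (by omega) hp.one_lt⟩
  haveI : NeZero (p ^ k) := ⟨pow_ne_zero k hp.ne_zero⟩
  set R := ZMod (p ^ k)
  set F := ZMod p
  set φ := ZMod.castHom (dvd_pow_self p (by omega : k ≠ 0)) (ZMod p) with hφ
  have hsurj : Function.Surjective φ := zmod_castHom_surjective p k hk
  have hnil : ∀ x, φ x = 0 → IsNilpotent x := fun x hx =>
    zmod_castHom_ker_nilpotent p k hk x hx
  set σ := Function.surjInv hsurj with hσdef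
  have hσ : ∀ y, φ (σ y) = y := fun y => Function.surjInv_eq hsurj y
  set K := {x : R // φ x = 0}
  -- step 0: regroup
  have e0 : {f : R[X] // f.Monic ∧ f.natDegree = d ∧ f.Separable}
      ≃ {x : {f : R[X] // f.Monic ∧ f.natDegree = d} // x.1.Separable} :=
    ⟨fun f => ⟨⟨f.1, f.2.1, f.2.2.1⟩, f.2.2.2⟩, fun x => ⟨x.1.1, x.1.2.1, x.1.2.2, x.2⟩,
      fun _ => rfl, fun _ => rfl⟩
  -- step 1: coefficients
  have e1 : {x : {f : R[X] // f.Monic ∧ f.natDegree = d} // x.1.Separable}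
      ≃ {c : Fin d → R // (monicMk d c).Separable} := by
    apply Equiv.subtypeEquiv (monicEquiv R d)
    intro x
    have hx : monicMk d (monicEquiv R d x) = x.1 :=
      congrArg Subtype.val ((monicEquiv R d).symm_apply_apply x)
    rw [hx]
  -- step 2: reduce mod p
  have e2 : {c : Fin d → R // (monicMk d c).Separable}
      ≃ {c : Fin d → R // (monicMk d (φ ∘ c)).Separable} := by
    apply Equiv.subtypeEquivRight
    intro c
    rw [← monicMk_map]
    exact ⟨fun h => h.map, fun h => separable_of_map_separable φ hsurj hnil h⟩
  -- step 3: splitting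
  have e3 : {c : Fin d → R // (monicMk d (φ ∘ c)).Separable}
      ≃ {y : (Fin d → F) × (Fin d → K) // (monicMk d y.1).Separable} := by
    refine ⟨fun c => ⟨(φ ∘ c.1, fun i => ⟨c.1 i - σ (φ (c.1 i)), by simp [hσ]⟩), c.2⟩,
      fun z => ⟨fun i => σ (z.1.1 i) + (z.1.2 i).1, ?_⟩, ?_, ?_⟩
    · have hc : (φ ∘ fun i => σ (z.1.1 i) + (z.1.2 i).1) = z.1.1 := by
        funext i
        simp [map_add, hσ, (z.1.2 i).2]
      rw [hc]
      exact z.2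
    · intro c
      apply Subtype.ext
      funext i
      simp
    · intro z
      apply Subtype.ext
      apply Prod.ext_iff.2
      constructor
      · funext i
        simp [map_add, hσ, (z.1.2 i).2]
      · funext i
        apply Subtype.ext
        simp [map_add, hσ, (z.1.2 i).2]
  -- step 4: product split
  have e4 : {y : (Fin d → F) × (Fin d → K) // (monicMk d y.1).Separable}
      ≃ {c : Fin d → F // (monicMk d c).Separable} × (Fin d → K) :=
    prodSubtypeFst (β := Fin d → K) (fun c : Fin d → F => (monicMk d c).Separable)
  -- step 5: back to polynomials over F, separable = squarefree
  have e0F : {f : F[X] // f.Monic ∧ f.natDegree = d ∧ f.Separable}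
      ≃ {x : {f : F[X] // f.Monic ∧ f.natDegree = d} // x.1.Separable} :=
    ⟨fun f => ⟨⟨f.1, f.2.1, f.2.2.1⟩, f.2.2.2⟩, fun x => ⟨x.1.1, x.1.2.1, x.1.2.2, x.2⟩,
      fun _ => rfl, fun _ => rfl⟩
  have e1F : {x : {f : F[X] // f.Monic ∧ f.natDegree = d} // x.1.Separable}
      ≃ {c : Fin d → F // (monicMk d c).Separable} := by
    apply Equiv.subtypeEquiv (monicEquiv F d)
    intro x
    have hx : monicMk d (monicEquiv F d x) = x.1 :=
      congrArg Subtype.val ((monicEquiv F d).symm_apply_apply x)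
    rw [hx]
  have e5 : {c : Fin d → F // (monicMk d c).Separable}
      ≃ {f : F[X] // f.Monic ∧ f.natDegree = d ∧ Squarefree f} :=
    (e0F.trans e1F).symm.trans (Equiv.subtypeEquivRight (fun f => by
      rw [PerfectField.separable_iff_squarefree]))
  -- kernel equivalence for counting
  have eK : R ≃ F × K :=
    ⟨fun x => (φ x, ⟨x - σ (φ x), by simp [hσ]⟩),
     fun y => σ y.1 + y.2.1, fun x => by simp, fun y => by
       apply Prod.ext_iff.2
       constructor
       · simp [map_add, hσ, y.2.2]
       · apply Subtype.ext
         simp [map_add, hσ, y.2.2]⟩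
  -- counting
  set s := Nat.card {f : F[X] // f.Monic ∧ f.natDegree = d ∧ Squarefree f} with hs
  set cK := Nat.card K with hcK
  have hcard : Nat.card {f : R[X] // f.Monic ∧ f.natDegree = d ∧ f.Separable}
      = s * cK ^ d := by
    have hfin : Nat.card (Fin d) = d := Nat.card_eq_fintype_card.trans (Fintype.card_fin d)
    rw [Nat.card_congr (((((e0.trans e1).trans e2).trans e3).trans e4).trans
      (Equiv.prodCongrLeft (fun _ => e5))), Nat.card_prod, Nat.card_fun, hfin]
  have h1 : s + p ^ (d - 1) = p ^ d := by
    have := card_squarefree_monic F hd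
    rwa [Nat.card_zmod] at this
  have h2 : p ^ k = p * cK := by
    have := Nat.card_congr eK
    rwa [Nat.card_zmod, Nat.card_prod, Nat.card_zmod] at this
  -- final computation
  have hA : Nat.card {f : (ZMod (p ^ k))[X] | f.Monic ∧ f.natDegree = d ∧ f.Separable}
      = s * cK ^ d := hcard
  rw [hA]
  obtain ⟨k', rfl⟩ : ∃ k', k = k' + 1 := ⟨k - 1, by omega⟩
  obtain ⟨d', rfl⟩ : ∃ d', d = d' + 2 := ⟨d - 2, by omega⟩
  have hp0 : (p : ℚ) ≠ 0 := Nat.cast_ne_zero.2 hp.ne_zero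
  have hcKq : (cK : ℚ) = (p : ℚ) ^ k' := by
    have h2' : (p : ℚ) * (cK : ℚ) = (p : ℚ) * (p : ℚ) ^ k' := by
      have := congrArg (Nat.cast : ℕ → ℚ) h2
      push_cast at this
      rw [← this, pow_succ]; ring
    exact mul_left_cancel₀ hp0 h2'
  have hsq : (s : ℚ) = (p : ℚ) ^ (d' + 2) - (p : ℚ) ^ (d' + 1) := by
    have : ((s + p ^ (d' + 2 - 1) : ℕ) : ℚ) = ((p ^ (d' + 2) : ℕ) : ℚ) := by rw [h1]
    push_cast at this
    simpa using by linarith [this]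
  push_cast
  rw [hsq, hcKq]
  field_simp
  ring
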